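/- Let C = ⋂_{i=1}^k D_i be an intersection of closed half-spaces of ℝ^n with 0 in the interior of C, let j be the gauge of C, U = { x : j(x) ≠ 0 }, and Fr(x) = x / j(x). Fix j_0 ∈ {1,…,k} with bounding hyperplane M_{j_0} of D_{j_0}, and suppose that for every nonempty open subset V of U one has Fr(V) ⊄ M_{j_0}. Then C = ⋂_{i ≠ j_0} D_i, i.e. the half-space D_{j_0} is redundant. -/

import Mathlib

/-- Let `C = ⋂_{i=1}^k D_i` be an intersection of closed half-spaces
`D_i = {x | c i ≤ f i x}` of `ℝ^n` (nonzero linear forms `f i`) with `0 ∈ interior C`.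
If for every nonempty open `V ⊆ U = {x | gauge C x ≠ 0}` the image of `V` under
`Fr x = (gauge C x)⁻¹ • x` is not contained in the hyperplane `M_{j₀} = {x | f j₀ x = c j₀}`,
then the half-space `D_{j₀}` is redundant: `C = ⋂_{i ≠ j₀} D_i`. -/
theorem redundant_halfspace_of_gauge_frontier
    {n k : ℕ} (f : Fin k → (EuclideanSpace ℝ (Fin n) →ₗ[ℝ] ℝ)) (c : Fin k → ℝ)
    (hf : ∀ i, f i ≠ 0)
    (C : Set (EuclideanSpace ℝ (Fin n))) (hC : C = ⋂ i, {x | c i ≤ f i x})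
    (h0 : (0 : EuclideanSpace ℝ (Fin n)) ∈ interior C)
    (j₀ : Fin k)
    (hnot : ∀ V : Set (EuclideanSpace ℝ (Fin n)), IsOpen V → V.Nonempty →
      V ⊆ {x | gauge C x ≠ 0} →
      ¬ ((fun x => (gauge C x)⁻¹ • x) '' V ⊆ {x | f j₀ x = c j₀})) :
    C = ⋂ i ∈ {i : Fin k | i ≠ j₀}, {x | c i ≤ f i x} := by
  -- every c i is negative
  obtain ⟨ε, hε, hball⟩ := Metric.mem_nhds_iff.mp (mem_interior_iff_mem_nhds.mp h0)
  have hball' : Metric.ball (0 : EuclideanSpace ℝ (Fin n)) ε ⊆ C := hball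
  have hcneg : ∀ i, c i < 0 := by
    intro i
    obtain ⟨v, hv⟩ : ∃ v, f i v ≠ 0 := by
      by_contra h
      push_neg at h
      exact hf i (LinearMap.ext fun v => h v)
    have hv0 : v ≠ 0 := fun h => hv (by simp [h])
    have hnv : (0:ℝ) < ‖v‖ := norm_pos_iff.mpr hv0
    set w : EuclideanSpace ℝ (Fin n) := (ε / (2 * ‖v‖)) • v with hw
    have hwb : ‖w‖ < ε := by
      rw [hw, norm_smul, Real.norm_eq_abs]
      have : |ε / (2 * ‖v‖)| = ε / (2 * ‖v‖) := abs_of_pos (by positivity)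
      rw [this]
      have h2 : ε / (2 * ‖v‖) * ‖v‖ = ε / 2 := by field_simp
      rw [h2]; linarith
    have hmemw : ∀ u : EuclideanSpace ℝ (Fin n), ‖u‖ < ε → c i ≤ f i u := by
      intro u hu
      have : u ∈ C := hball' (by simpa [Metric.mem_ball, dist_eq_norm] using hu)
      rw [hC] at this
      exact Set.mem_iInter.mp this i
    have h1 := hmemw w hwb
    have h2 := hmemw (-w) (by simpa using hwb)
    have hfw : f i w = (ε / (2 * ‖v‖)) * f i v := by simp [hw]
    have hfw' : f i (-w) = -((ε / (2 * ‖v‖)) * f i v) := by simp [hw]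
    have hpos : (0:ℝ) < ε / (2 * ‖v‖) := by positivity
    rcases lt_or_gt_of_ne hv with h | h
    · have : f i w < 0 := by rw [hfw]; exact mul_neg_of_pos_of_neg hpos h
      linarith
    · have : f i (-w) < 0 := by rw [hfw']; nlinarith
      linarith
  -- key gauge computation on the bad region
  have hgauge : ∀ y : EuclideanSpace ℝ (Fin n), f j₀ y < c j₀ →
      (∀ i, i ≠ j₀ → c i < f i y) → gauge C y = f j₀ y / c j₀ := by
    intro y hy hyi
    have hcj := hcneg j₀
    have hfy : f j₀ y < 0 := lt_trans hy hcj
    have hg1 : (1:ℝ) < f j₀ y / c j₀ := by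
      rw [lt_div_iff_of_neg hcj]; linarith
    have hset : {r ∈ Set.Ioi (0:ℝ) | r⁻¹ • y ∈ C} = Set.Ici (f j₀ y / c j₀) := by
      ext t
      simp only [Set.mem_setOf_eq, Set.mem_Ioi, Set.mem_Ici]
      constructor
      · rintro ⟨ht, htC⟩
        rw [hC, Set.mem_iInter] at htC
        have := htC j₀
        simp only [Set.mem_setOf_eq, map_smul, smul_eq_mul] at this
        -- c j₀ ≤ t⁻¹ * f j₀ y
        have h' : t * c j₀ ≤ f j₀ y := by
          rw [le_inv_mul_iff₀ ht] at this
          exact this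
        rw [div_le_iff_of_neg hcj]
        linarith [mul_comm t (c j₀)]
      · intro hgt
        have ht : (0:ℝ) < t := lt_of_lt_of_le (lt_trans one_pos hg1) hgt
        refine ⟨ht, ?_⟩
        rw [hC, Set.mem_iInter]
        intro i
        simp only [Set.mem_setOf_eq, map_smul, smul_eq_mul]
        rw [le_inv_mul_iff₀ ht]
        by_cases hi : i = j₀
        · subst hi
          have : t * c i ≤ (f i y / c i) * c i :=
            mul_le_mul_of_nonpos_right hgt (le_of_lt (hcneg i))
          rw [div_mul_cancel₀ _ (ne_of_lt (hcneg i))] at this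
          exact this
        · have hci := hcneg i
          have hfi := hyi i hi
          have ht1 : (1:ℝ) ≤ t := le_trans (le_of_lt hg1) hgt
          rcases le_or_gt 0 (f i y) with h | h
          · nlinarith
          · nlinarith
    rw [gauge_def', hset, csInf_Ici]
  -- main argument
  rw [hC]
  apply Set.Subset.antisymm
  · intro x hx
    simp only [Set.mem_iInter] at hx ⊢
    intro i _
    exact hx i
  · intro x hx
    by_contra hxC
    simp only [Set.mem_iInter, Set.mem_setOf_eq] at hx hxC
    push_neg at hxC
    obtain ⟨i₀, hi₀⟩ := hxC
    have hij : i₀ = j₀ := by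
      by_contra h
      exact absurd (hx i₀ h) (not_le.mpr hi₀)
    subst hij
    -- so f j₀ x < c j₀, and c i ≤ f i x for i ≠ j₀
    have hxj : f i₀ x < c i₀ := hi₀
    set W : Set (EuclideanSpace ℝ (Fin n)) :=
      {y | f i₀ y < c i₀} ∩ ⋂ i ∈ {i : Fin k | i ≠ i₀}, {y | c i < f i y} with hW
    have hWopen : IsOpen W := by
      apply IsOpen.inter
      · exact isOpen_lt (f i₀).continuous_of_finiteDimensional continuous_const
      · refine Set.Finite.isOpen_biInter (Set.toFinite _) (fun i _ => ?_)
        exact isOpen_lt continuous_const (f i).continuous_of_finiteDimensional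
    have hWmem : ∀ y ∈ W, f i₀ y < c i₀ ∧ ∀ i, i ≠ i₀ → c i < f i y := by
      intro y hy
      obtain ⟨h1, h2⟩ := hy
      rw [Set.mem_iInter₂] at h2
      exact ⟨h1, fun i hi => h2 i hi⟩
    have hWne : W.Nonempty := by
      have hfx : f i₀ x < 0 := lt_trans hxj (hcneg i₀)
      set r : ℝ := c i₀ / f i₀ x with hr
      have hr0 : 0 < r := div_pos_of_neg_of_neg (hcneg i₀) hfx
      have hr1 : r < 1 := by
        rw [hr, div_lt_one_of_neg hfx]
        exact hxj
      set s : ℝ := (1 + r) / 2 with hs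
      have hsr : r < s := by rw [hs]; linarith
      have hs0 : 0 < s := by rw [hs]; linarith
      have hs1 : s < 1 := by rw [hs]; linarith
      refine ⟨s • x, ?_, ?_⟩
      · show f i₀ (s • x) < c i₀
        have : f i₀ (s • x) = s * f i₀ x := by simp
        rw [this]
        have : s * f i₀ x < r * f i₀ x := by nlinarith
        have hrx : r * f i₀ x = c i₀ := div_mul_cancel₀ _ (ne_of_lt hfx)
        linarith
      · rw [Set.mem_iInter₂]
        intro i hi
        show c i < f i (s • x)
        have heq : f i (s • x) = s * f i x := by simp
        rw [heq]
        have hci := hcneg i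
        have hfi := hx i hi
        rcases le_or_gt 0 (f i x) with h | h
        · nlinarith
        · nlinarith
    have hWU : W ⊆ {y | gauge C y ≠ 0} := by
      intro y hy
      obtain ⟨h1, h2⟩ := hWmem y hy
      have := hgauge y h1 h2
      have hfy : f i₀ y < 0 := lt_trans h1 (hcneg i₀)
      have : gauge C y = f i₀ y / c i₀ := this
      rw [Set.mem_setOf_eq, this]
      have : 0 < f i₀ y / c i₀ := div_pos_of_neg_of_neg hfy (hcneg i₀)
      exact ne_of_gt this
    refine hnot W hWopen hWne hWU ?_
    rintro _ ⟨y, hy, rfl⟩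
    obtain ⟨h1, h2⟩ := hWmem y hy
    have hfy : f i₀ y < 0 := lt_trans h1 (hcneg i₀)
    show f i₀ ((gauge C y)⁻¹ • y) = c i₀
    rw [hgauge y h1 h2, map_smul, smul_eq_mul]
    field_simp
    rw [mul_comm, mul_div_assoc, div_self (ne_of_lt hfy), mul_one]
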